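/- arXiv:2209.01805 — 2 statements merged into one kernel-verified Lean document; each statement's English description precedes it below -/
import Mathlib

section
/- Let (Ω, F, P) be a probability space, H ⊆ F a sub-σ-algebra, ν : Ω → ℝ with ν^q integrable for 1 ≤ q ≤ r, and let r, k be integers with 1 ≤ k ≤ r. Write m_q := E[ν^q | H] for 0 ≤ q ≤ r (so m₀ = 1) and assume m_r ≠ 0 almost surely and that 1/m_r and all products below are integrable. Define H-measurable b̄_r := 1/m_r and, recursively for q = k−1 down to 1, b_q := −b̄_r·C(r,q)·m_{r−q} − ∑_{u=1}^{k−1−q} b_{q+u}·C(q+u,q)·m_u. Then for every integer q with 1 ≤ q ≤ k−1, E[ b̄_r·C(r,q)·ν^{r−q} + ∑_{u=q}^{k−1} b_u·C(u,q)·ν^{u−q} | H ] = 0 almost surely. -/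
open MeasureTheory Finset

/-- Splitting off the bottom element of a sum over `Icc q n` and reindexing. -/
lemma sum_Icc_split_aux (f : ℕ → ℝ) (q n : ℕ) (h : q ≤ n) :
    ∑ u ∈ Finset.Icc q n, f u = f q + ∑ u ∈ Finset.Icc 1 (n - q), f (q + u) := by
  rw [← Finset.add_sum_erase _ f (Finset.mem_Icc.mpr ⟨le_rfl, h⟩), Finset.Icc_erase_left]
  congr 1
  have hmap : Finset.Ioc q n = (Finset.Icc 1 (n - q)).map (addLeftEmbedding q) := by
    rw [Finset.map_add_left_Icc, Nat.add_sub_cancel' h, Finset.Icc_add_one_left_eq_Ioc]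
  rw [hmap, Finset.sum_map]
  rfl

/-- The orthogonality system (**) in the proof of Theorem 1: with `m_q = E[ν^q | H]`,
`b̄_r = 1/m_r`, and `b_q` defined by the descending recursion, the mixed-derivative
orthogonality conditions hold: for `1 ≤ q ≤ k-1`,
`E[ b̄_r·C(r,q)·ν^{r-q} + ∑_{u=q}^{k-1} b_u·C(u,q)·ν^{u-q} | H ] = 0` a.s. -/
theorem rcl_orthogonality_system {Ω : Type*} {F : MeasurableSpace Ω}
    (μ : Measure Ω) [IsProbabilityMeasure μ]
    (H : MeasurableSpace Ω) (hH : H ≤ F)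
    (ν : Ω → ℝ) (r k : ℕ) (hk1 : 1 ≤ k) (hkr : k ≤ r)
    (hint : ∀ q, 1 ≤ q → q ≤ r → Integrable (fun ω => ν ω ^ q) μ)
    (m : ℕ → Ω → ℝ) (hm : ∀ q, q ≤ r → m q = μ[fun ω => ν ω ^ q|H])
    (hmr : ∀ᵐ ω ∂μ, m r ω ≠ 0)
    (hinv : Integrable (fun ω => (m r ω)⁻¹) μ)
    (b : ℕ → Ω → ℝ)
    (hb : ∀ q, 1 ≤ q → q ≤ k - 1 → b q = fun ω =>
      -(m r ω)⁻¹ * (r.choose q : ℝ) * m (r - q) ω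
        - ∑ u ∈ Finset.Icc 1 (k - 1 - q), b (q + u) ω * ((q + u).choose q : ℝ) * m u ω)
    (hint1 : ∀ q, 1 ≤ q → q ≤ k - 1 →
      Integrable (fun ω => (m r ω)⁻¹ * (r.choose q : ℝ) * ν ω ^ (r - q)) μ)
    (hint2 : ∀ q u, 1 ≤ q → q ≤ u → u ≤ k - 1 →
      Integrable (fun ω => b u ω * (u.choose q : ℝ) * ν ω ^ (u - q)) μ) :
    ∀ q, 1 ≤ q → q ≤ k - 1 →
      μ[fun ω => (m r ω)⁻¹ * (r.choose q : ℝ) * ν ω ^ (r - q)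
          + ∑ u ∈ Finset.Icc q (k - 1), b u ω * (u.choose q : ℝ) * ν ω ^ (u - q)|H]
        =ᵐ[μ] 0 := by
  -- strong measurability of the local moments
  have hmSM : ∀ u, u ≤ r → StronglyMeasurable[H] (m u) := by
    intro u hu; rw [hm u hu]; exact stronglyMeasurable_condExp
  -- strong measurability of the coefficients, by downward induction
  have hbSM : ∀ d q, 1 ≤ q → q ≤ k - 1 → k - 1 - q ≤ d → StronglyMeasurable[H] (b q) := by
    intro d
    induction d with
    | zero =>
      intro q hq1 hq2 hd
      rw [hb q hq1 hq2]
      refine StronglyMeasurable.sub ?_ ?_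
      · exact ((hmSM r le_rfl).measurable.inv.stronglyMeasurable.neg.mul_const _).mul (hmSM _ (Nat.sub_le _ _))
      · refine Finset.stronglyMeasurable_fun_sum _ fun u hu => ?_
        obtain ⟨hu1, hu2⟩ := Finset.mem_Icc.mp hu
        omega
    | succ d ih =>
      intro q hq1 hq2 hd
      rw [hb q hq1 hq2]
      refine StronglyMeasurable.sub ?_ ?_
      · exact ((hmSM r le_rfl).measurable.inv.stronglyMeasurable.neg.mul_const _).mul (hmSM _ (Nat.sub_le _ _))
      · refine Finset.stronglyMeasurable_fun_sum _ fun u hu => ?_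
        obtain ⟨hu1, hu2⟩ := Finset.mem_Icc.mp hu
        exact ((ih (q + u) (by omega) (by omega) (by omega)).mul_const _).mul
          (hmSM u (by omega))
  -- integrability of powers of ν
  have hνpow : ∀ p, p ≤ r → Integrable (fun ω => ν ω ^ p) μ := by
    intro p hp
    rcases Nat.eq_zero_or_pos p with h0 | h1
    · subst h0; simpa using integrable_const (1 : ℝ)
    · exact hint p h1 hp
  -- m 0 = 1
  have hm0 : m 0 = fun _ => (1 : ℝ) := by
    rw [hm 0 (Nat.zero_le r)]
    have : (fun ω => ν ω ^ 0) = fun _ : Ω => (1 : ℝ) := by funext ω; simp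
    rw [this, condExp_const hH]
  intro q hq1 hq2
  have hT1 := hint1 q hq1 hq2
  have hT2 : ∀ u ∈ Finset.Icc q (k - 1),
      Integrable (fun ω => b u ω * (u.choose q : ℝ) * ν ω ^ (u - q)) μ := by
    intro u hu
    obtain ⟨h1, h2⟩ := Finset.mem_Icc.mp hu
    exact hint2 q u hq1 h1 h2
  have hsum_int : Integrable
      (fun ω => ∑ u ∈ Finset.Icc q (k - 1), b u ω * (u.choose q : ℝ) * ν ω ^ (u - q)) μ :=
    integrable_finset_sum _ hT2
  -- pull out the H-measurable factor in the first term
  have hc1 : μ[fun ω => (m r ω)⁻¹ * (r.choose q : ℝ) * ν ω ^ (r - q)|H]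
      =ᵐ[μ] fun ω => (m r ω)⁻¹ * (r.choose q : ℝ) * m (r - q) ω := by
    have h := condExp_mul_of_stronglyMeasurable_left (μ := μ) (m := H)
      (f := fun ω => (m r ω)⁻¹ * (r.choose q : ℝ)) (g := fun ω => ν ω ^ (r - q))
      ((hmSM r le_rfl).measurable.inv.stronglyMeasurable.mul_const _) hT1 (hνpow (r - q) (Nat.sub_le _ _))
    refine h.trans ?_
    rw [← hm (r - q) (Nat.sub_le _ _)]
    rfl
  -- pull out the H-measurable factor in each summand
  have hc2 : ∀ u ∈ Finset.Icc q (k - 1),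
      μ[fun ω => b u ω * (u.choose q : ℝ) * ν ω ^ (u - q)|H]
        =ᵐ[μ] fun ω => b u ω * (u.choose q : ℝ) * m (u - q) ω := by
    intro u hu
    obtain ⟨h1, h2⟩ := Finset.mem_Icc.mp hu
    have h := condExp_mul_of_stronglyMeasurable_left (μ := μ) (m := H)
      (f := fun ω => b u ω * (u.choose q : ℝ)) (g := fun ω => ν ω ^ (u - q))
      ((hbSM (k - 1 - u) u (by omega) h2 le_rfl).mul_const _)
      (hT2 u hu) (hνpow (u - q) (by omega))
    refine h.trans ?_
    rw [← hm (u - q) (by omega)]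
    rfl
  -- the conditional expectation of the whole expression
  have hmain : μ[fun ω => (m r ω)⁻¹ * (r.choose q : ℝ) * ν ω ^ (r - q)
        + ∑ u ∈ Finset.Icc q (k - 1), b u ω * (u.choose q : ℝ) * ν ω ^ (u - q)|H]
      =ᵐ[μ] fun ω => (m r ω)⁻¹ * (r.choose q : ℝ) * m (r - q) ω
        + ∑ u ∈ Finset.Icc q (k - 1), b u ω * (u.choose q : ℝ) * m (u - q) ω := by
    refine (condExp_add hT1 hsum_int H).trans ?_
    have hs : μ[fun ω => ∑ u ∈ Finset.Icc q (k - 1),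
          b u ω * (u.choose q : ℝ) * ν ω ^ (u - q)|H]
        =ᵐ[μ] fun ω => ∑ u ∈ Finset.Icc q (k - 1), b u ω * (u.choose q : ℝ) * m (u - q) ω := by
      have he : (fun ω => ∑ u ∈ Finset.Icc q (k - 1), b u ω * (u.choose q : ℝ) * ν ω ^ (u - q))
          = ∑ u ∈ Finset.Icc q (k - 1), fun ω => b u ω * (u.choose q : ℝ) * ν ω ^ (u - q) := by
        funext ω; simp
      rw [he]
      have h := condExp_finset_sum (μ := μ) (m := H)
        (f := fun u ω => b u ω * (u.choose q : ℝ) * ν ω ^ (u - q)) hT2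
      refine h.trans ?_
      refine (eventuallyEq_sum fun u hu => hc2 u hu).trans ?_
      refine Filter.EventuallyEq.of_eq ?_
      funext ω
      simp
    filter_upwards [hc1, hs] with ω h1 h2
    simp only [Pi.add_apply]
    rw [h1, h2]
  refine hmain.trans ?_
  -- the algebraic identity: everything cancels by the recursion defining b q
  refine Filter.EventuallyEq.of_eq ?_
  funext ω
  have hsplit := sum_Icc_split_aux
    (fun u => b u ω * (u.choose q : ℝ) * m (u - q) ω) q (k - 1) hq2
  rw [hsplit]
  have hq0 : b q ω * (q.choose q : ℝ) * m (q - q) ω = b q ω := by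
    rw [Nat.choose_self, Nat.sub_self, hm0]
    simp
  rw [hq0]
  have hterms : ∀ u ∈ Finset.Icc 1 (k - 1 - q),
      b (q + u) ω * ((q + u).choose q : ℝ) * m (q + u - q) ω
        = b (q + u) ω * ((q + u).choose q : ℝ) * m u ω := by
    intro u hu
    congr 2
    omega
  rw [Finset.sum_congr rfl hterms, hb q hq1 hq2]
  simp only [Pi.zero_apply]
  ring
end

section
/- Let (Ω, F, P) be a probability space, let Z : Ω → E and D : Ω → S be random elements, and let Y : Ω → ℝ be a random variable such that Y and D are conditionally independent given the σ-algebra σ(Z) generated by Z. Let g : E → ℝ be measurable and let r ≥ 1 be an integer such that (Y − g(Z))^r is integrable. Then E[(Y − g(Z))^r | σ(D) ⊔ σ(Z)] = E[(Y − g(Z))^r | σ(Z)] almost surely; in particular, the conditional r-th moment of the residual ξ = Y − g(Z) given (D, Z) does not depend on D. -/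
open MeasureTheory ProbabilityTheory MeasurableSpace

lemma aux_isPiSystem {Ω : Type*} (ma mb : MeasurableSpace Ω) :
    IsPiSystem {s : Set Ω | ∃ A B, MeasurableSet[ma] A ∧ MeasurableSet[mb] B ∧ s = A ∩ B} := by
  rintro s ⟨A, B, hA, hB, rfl⟩ s' ⟨A', B', hA', hB', rfl⟩ -
  exact ⟨A ∩ A', B ∩ B', hA.inter hA', hB.inter hB', Set.inter_inter_inter_comm A B A' B'⟩

lemma aux_sup_eq_generateFrom {Ω : Type*} (ma mb : MeasurableSpace Ω) :
    ma ⊔ mb = MeasurableSpace.generateFrom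
      {s : Set Ω | ∃ A B, MeasurableSet[ma] A ∧ MeasurableSet[mb] B ∧ s = A ∩ B} := by
  refine le_antisymm (sup_le ?_ ?_) (MeasurableSpace.generateFrom_le ?_)
  · exact fun s hs => measurableSet_generateFrom ⟨s, Set.univ, hs, MeasurableSet.univ,
      (Set.inter_univ s).symm⟩
  · exact fun s hs => measurableSet_generateFrom ⟨Set.univ, s, MeasurableSet.univ, hs,
      (Set.univ_inter s).symm⟩
  · rintro s ⟨A, B, hA, hB, rfl⟩
    exact ((le_sup_left : ma ≤ ma ⊔ mb) A hA).inter ((le_sup_right : mb ≤ ma ⊔ mb) B hB)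

lemma aux_measure_inter_of_eq_one {Ω : Type*} [MeasurableSpace Ω] (ν : MeasureTheory.Measure Ω)
    [MeasureTheory.IsProbabilityMeasure ν] {B : Set Ω} (hB : MeasurableSet B) (h : ν B = 1)
    (s : Set Ω) : ν (s ∩ B) = ν s := by
  have h1 : ν (s \ B) = 0 := by
    have : ν (s \ B) ≤ ν Bᶜ := measure_mono (Set.diff_subset_compl s B)
    rw [prob_compl_eq_one_sub hB, h] at this
    simpa using this
  have h2 := measure_inter_add_diff (μ := ν) s hB
  rw [h1, add_zero] at h2
  exact h2

lemma aux_kernel_indep_sup {Ω : Type*} (m₁ mY m₂ : MeasurableSpace Ω)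
    [mΩ : MeasurableSpace Ω] [StandardBorelSpace Ω]
    (μ : MeasureTheory.Measure Ω) [MeasureTheory.IsFiniteMeasure μ]
    (hm₁ : m₁ ≤ mΩ) (hmY : mY ≤ mΩ) (hm₂ : m₂ ≤ mΩ)
    (h : Kernel.Indep mY m₂ (condExpKernel μ m₁) (μ.trim hm₁)) :
    Kernel.Indep (mY ⊔ m₁) m₂ (condExpKernel μ m₁) (μ.trim hm₁) := by
  refine Kernel.IndepSets.indep (sup_le hmY hm₁) hm₂ (aux_isPiSystem mY m₁)
    (@MeasurableSpace.isPiSystem_measurableSet Ω m₂) (aux_sup_eq_generateFrom mY m₁)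
    (@MeasurableSpace.generateFrom_measurableSet Ω m₂).symm ?_
  rintro t1 t2 ⟨T, B, hT, hB, rfl⟩ ht2
  have hBΩ : MeasurableSet[mΩ] B := hm₁ B hB
  have hTA := h T t2 hT ht2
  have hcond := condExpKernel_ae_eq_trim_condExp (μ := μ) hm₁ hBΩ
  have hBind : (μ[B.indicator (fun _ => (1:ℝ))|m₁]) = B.indicator (fun _ => 1) :=
    condExp_of_stronglyMeasurable hm₁ (stronglyMeasurable_const.indicator hB)
      ((integrable_const 1).indicator hBΩ)
  rw [hBind] at hcond
  filter_upwards [hTA, hcond] with ω hω hb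
  haveI : IsProbabilityMeasure (condExpKernel μ m₁ ω) := inferInstance
  have hne : condExpKernel μ m₁ ω B ≠ ⊤ := measure_ne_top _ _
  by_cases hωB : ω ∈ B
  · have hb1 : condExpKernel μ m₁ ω B = 1 := by
      have ht : (condExpKernel μ m₁ ω B).toReal = 1 := by
        simpa [Set.indicator_of_mem hωB, Measure.real] using hb
      rw [← ENNReal.ofReal_toReal hne, ht]
      simp
    rw [Set.inter_right_comm T B t2, aux_measure_inter_of_eq_one _ hBΩ hb1,
      aux_measure_inter_of_eq_one _ hBΩ hb1, hω]
  · have hb0 : condExpKernel μ m₁ ω B = 0 := by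
      have ht : (condExpKernel μ m₁ ω B).toReal = 0 := by
        simpa [Set.indicator_of_notMem hωB, Measure.real] using hb
      rcases (ENNReal.toReal_eq_zero_iff _).mp ht with h0 | h0
      · exact h0
      · exact absurd h0 hne
    rw [measure_mono_null (Set.inter_subset_left.trans Set.inter_subset_right) hb0,
      measure_mono_null Set.inter_subset_right hb0, zero_mul]


lemma aux_setIntegral_condexp_eq {Ω : Type*} (m₁ m₂ M : MeasurableSpace Ω)
    [mΩ : MeasurableSpace Ω] (μ : MeasureTheory.Measure Ω) [MeasureTheory.IsProbabilityMeasure μ]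
    (hm₁ : m₁ ≤ mΩ) (hm₂ : m₂ ≤ mΩ) (hM : M ≤ mΩ)
    (hprod : ∀ C A, MeasurableSet[M] C → MeasurableSet[m₂] A →
      (μ[((C ∩ A).indicator (fun _ => (1:ℝ)))|m₁]) =ᵐ[μ]
        (μ[(C.indicator (fun _ => (1:ℝ)))|m₁]) * (μ[(A.indicator (fun _ => (1:ℝ)))|m₁]))
    (f : Ω → ℝ) (hf_int : MeasureTheory.Integrable f μ)
    (hfM : AEStronglyMeasurable[M] f μ)
    {A B : Set Ω} (hA : MeasurableSet[m₂] A) (hB : MeasurableSet[m₁] B) :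
    ∫ x in A ∩ B, f x ∂μ = ∫ x in A ∩ B, (μ[f|m₁]) x ∂μ := by
  have hAΩ : MeasurableSet[mΩ] A := hm₂ A hA
  have hBΩ : MeasurableSet[mΩ] B := hm₁ B hB
  have hABΩ : MeasurableSet[mΩ] (A ∩ B) := hAΩ.inter hBΩ
  refine MemLp.induction_stronglyMeasurable hM ENNReal.one_ne_top
    (fun f => ∫ x in A ∩ B, f x ∂μ = ∫ x in A ∩ B, (μ[f|m₁]) x ∂μ) ?_ ?_ ?_ ?_
    (memLp_one_iff_integrable.mpr hf_int) hfM
  · -- indicator case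
    intro c C hC _
    have hCΩ : MeasurableSet[mΩ] C := hM C hC
    -- key1 : the case c = 1
    have key1 : ∫ x in A ∩ B, (C.indicator (fun _ => (1:ℝ))) x ∂μ
        = ∫ x in A ∩ B, (μ[(C.indicator (fun _ => (1:ℝ)))|m₁]) x ∂μ := by
      set iC : Ω → ℝ := C.indicator (fun _ => 1) with hiC
      set iA : Ω → ℝ := A.indicator (fun _ => 1) with hiA
      set iB : Ω → ℝ := B.indicator (fun _ => 1) with hiB
      set iCA : Ω → ℝ := (C ∩ A).indicator (fun _ => 1) with hiCA
      have h_int_iC : Integrable iC μ := (integrable_const 1).indicator hCΩ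
      have h_int_iA : Integrable iA μ := (integrable_const 1).indicator hAΩ
      have h_int_iCA : Integrable iCA μ := (integrable_const 1).indicator (hCΩ.inter hAΩ)
      set φ : Ω → ℝ := B.indicator (μ[iC|m₁]) with hφ
      have hφ_sm : StronglyMeasurable[m₁] φ := stronglyMeasurable_condExp.indicator hB
      have hφ_int : Integrable φ μ := integrable_condExp.indicator hBΩ
      have e1 : A.indicator φ = φ * iA := by
        funext x
        by_cases hx : x ∈ A <;> simp [hiA, hx, Set.indicator_apply]
      have hint3 : Integrable (φ * iA) μ := e1 ▸ hφ_int.indicator hAΩ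
      have e4 : μ[φ * iA|m₁] =ᵐ[μ] φ * μ[iA|m₁] :=
        condExp_mul_of_stronglyMeasurable_left hφ_sm hint3 h_int_iA
      have e5 : φ * (μ[iA|m₁]) = iB * ((μ[iC|m₁]) * (μ[iA|m₁])) := by
        funext x
        by_cases hx : x ∈ B <;> simp [hφ, hiB, hx, Set.indicator_apply, mul_assoc]
      have e6 : iB * ((μ[iC|m₁]) * (μ[iA|m₁])) =ᵐ[μ] iB * (μ[iCA|m₁]) :=
        Filter.EventuallyEq.mul Filter.EventuallyEq.rfl (hprod C A hC hA).symm
      have e8 : iB * iCA = ((C ∩ A) ∩ B).indicator (fun _ => (1:ℝ)) := by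
        funext x
        by_cases hx1 : x ∈ B <;> by_cases hx2 : x ∈ C ∩ A <;>
          simp [hiB, hiCA, hx1, hx2, Set.indicator_apply]
      have hint7 : Integrable (iB * iCA) μ :=
        e8 ▸ (integrable_const 1).indicator ((hCΩ.inter hAΩ).inter hBΩ)
      have e7 : μ[iB * iCA|m₁] =ᵐ[μ] iB * (μ[iCA|m₁]) :=
        condExp_mul_of_stronglyMeasurable_left (stronglyMeasurable_const.indicator hB) hint7 h_int_iCA
      have lhs_eq : ∫ x in A ∩ B, iC x ∂μ = (μ ((C ∩ A) ∩ B)).toReal := by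
        rw [hiC, setIntegral_indicator hCΩ, MeasureTheory.setIntegral_const, smul_eq_mul,
          mul_one, Set.inter_comm (A ∩ B) C, ← Set.inter_assoc, Measure.real]
      have rhs_eq : ∫ x in A ∩ B, (μ[iC|m₁]) x ∂μ = (μ ((C ∩ A) ∩ B)).toReal := by
        calc ∫ x in A ∩ B, (μ[iC|m₁]) x ∂μ
            = ∫ x, ((A ∩ B).indicator (μ[iC|m₁])) x ∂μ := (integral_indicator hABΩ).symm
          _ = ∫ x, (φ * iA) x ∂μ := by rw [← Set.indicator_indicator, ← hφ, e1]
          _ = ∫ x, (μ[φ * iA|m₁]) x ∂μ := (integral_condExp hm₁).symm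
          _ = ∫ x, (φ * (μ[iA|m₁])) x ∂μ := integral_congr_ae e4
          _ = ∫ x, (iB * ((μ[iC|m₁]) * (μ[iA|m₁]))) x ∂μ := by rw [e5]
          _ = ∫ x, (iB * (μ[iCA|m₁])) x ∂μ := integral_congr_ae e6
          _ = ∫ x, (μ[iB * iCA|m₁]) x ∂μ := (integral_congr_ae e7).symm
          _ = ∫ x, (iB * iCA) x ∂μ := integral_condExp hm₁
          _ = ∫ x, (((C ∩ A) ∩ B).indicator (fun _ => (1:ℝ))) x ∂μ := by rw [e8]
          _ = (μ ((C ∩ A) ∩ B)).toReal := by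
              rw [integral_indicator ((hCΩ.inter hAΩ).inter hBΩ),
                MeasureTheory.setIntegral_const, smul_eq_mul, mul_one, Measure.real]
      rw [lhs_eq, rhs_eq]
    -- general constant c
    have hsmul : C.indicator (fun _ => c) = c • C.indicator (fun _ => (1:ℝ)) := by
      funext x
      by_cases hx : x ∈ C <;> simp [hx]
    rw [hsmul]
    calc ∫ x in A ∩ B, (c • C.indicator (fun _ => (1:ℝ))) x ∂μ
        = c • ∫ x in A ∩ B, (C.indicator (fun _ => (1:ℝ))) x ∂μ := integral_smul c _
      _ = c • ∫ x in A ∩ B, (μ[(C.indicator (fun _ => (1:ℝ)))|m₁]) x ∂μ := by rw [key1]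
      _ = ∫ x in A ∩ B, (c • (μ[(C.indicator (fun _ => (1:ℝ)))|m₁])) x ∂μ :=
          (integral_smul c _).symm
      _ = ∫ x in A ∩ B, (μ[c • C.indicator (fun _ => (1:ℝ))|m₁]) x ∂μ := by
          refine integral_congr_ae (ae_restrict_of_ae ?_)
          exact (condExp_smul c _ m₁).symm
  · -- additivity
    intro u v _ hu_mem hv_mem _ _ hu_eq hv_eq
    have hu_int : Integrable u μ := memLp_one_iff_integrable.mp hu_mem
    have hv_int : Integrable v μ := memLp_one_iff_integrable.mp hv_mem
    have h1 : ∫ x in A ∩ B, (u + v) x ∂μ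
        = ∫ x in A ∩ B, u x ∂μ + ∫ x in A ∩ B, v x ∂μ :=
      integral_add' hu_int.integrableOn hv_int.integrableOn
    have h2 : ∫ x in A ∩ B, (μ[u + v|m₁]) x ∂μ
        = ∫ x in A ∩ B, (μ[u|m₁]) x ∂μ + ∫ x in A ∩ B, (μ[v|m₁]) x ∂μ := by
      rw [← integral_add' integrable_condExp.integrableOn integrable_condExp.integrableOn]
      exact integral_congr_ae (ae_restrict_of_ae (condExp_add hu_int hv_int m₁))
    rw [h1, h2, hu_eq, hv_eq]
  · -- closedness
    haveI : SigmaFinite (μ.trim hm₁) := inferInstance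
    have heq₁ : (fun h : lpMeas ℝ ℝ M 1 μ => ∫ x in A ∩ B, (h : Ω → ℝ) x ∂μ) =
        (fun u : Lp ℝ 1 μ => ∫ x in A ∩ B, u x ∂μ) ∘ Submodule.subtypeL _ := by
      refine funext fun h => integral_congr_ae (ae_restrict_of_ae ?_)
      simp_rw [Submodule.coe_subtypeL', Submodule.coe_subtype]
      exact Filter.Eventually.of_forall fun _ => by trivial
    have heq₂ : (fun h : lpMeas ℝ ℝ M 1 μ => ∫ x in A ∩ B, (μ[(h : Ω → ℝ)|m₁]) x ∂μ) =
        ((fun u : Lp ℝ 1 μ => ∫ x in A ∩ B, u x ∂μ) ∘ (condExpL1CLM ℝ hm₁ μ)) ∘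
          Submodule.subtypeL _ := by
      refine funext fun h => ?_
      simp only [Function.comp_apply, Submodule.coe_subtypeL', Submodule.coe_subtype]
      refine integral_congr_ae (ae_restrict_of_ae ?_)
      have hint : Integrable ((h : Lp ℝ 1 μ) : Ω → ℝ) μ := L1.integrable_coeFn _
      have := condExp_ae_eq_condExpL1CLM (E := ℝ) hm₁ hint
      refine this.trans ?_
      rw [hint.toL1_coeFn]
    refine isClosed_eq ?_ ?_
    · rw [heq₁]
      exact (continuous_setIntegral _).comp (ContinuousLinearMap.continuous _)
    · rw [heq₂]
      exact ((continuous_setIntegral _).comp (ContinuousLinearMap.continuous _)).comp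
        (ContinuousLinearMap.continuous _)
  · -- ae congruence
    intro u v huv _ hu_eq
    have h1 : ∫ x in A ∩ B, v x ∂μ = ∫ x in A ∩ B, u x ∂μ :=
      integral_congr_ae (ae_restrict_of_ae huv.symm)
    have h2 : ∫ x in A ∩ B, (μ[v|m₁]) x ∂μ = ∫ x in A ∩ B, (μ[u|m₁]) x ∂μ :=
      integral_congr_ae (ae_restrict_of_ae (condExp_congr_ae huv.symm))
    rw [h1, h2, hu_eq]

lemma aux_main {Ω : Type*} (m₁ mY m₂ : MeasurableSpace Ω)
    [mΩ : MeasurableSpace Ω] [StandardBorelSpace Ω]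
    (μ : MeasureTheory.Measure Ω) [MeasureTheory.IsProbabilityMeasure μ]
    (hm₁ : m₁ ≤ mΩ) (hmY : mY ≤ mΩ) (hm₂ : m₂ ≤ mΩ)
    (hKI : Kernel.Indep mY m₂ (condExpKernel μ m₁) (μ.trim hm₁))
    (f : Ω → ℝ) (hf_int : MeasureTheory.Integrable f μ)
    (hfM : StronglyMeasurable[mY ⊔ m₁] f) :
    μ[f|m₂ ⊔ m₁] =ᵐ[μ] μ[f|m₁] := by
  have hM : mY ⊔ m₁ ≤ mΩ := sup_le hmY hm₁
  have hm : m₂ ⊔ m₁ ≤ mΩ := sup_le hm₂ hm₁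
  have hCI : CondIndep m₁ (mY ⊔ m₁) m₂ hm₁ μ :=
    aux_kernel_indep_sup m₁ mY m₂ μ hm₁ hmY hm₂ hKI
  have hprod := (condIndep_iff m₁ (mY ⊔ m₁) m₂ hm₁ hM hm₂ μ).mp hCI
  have hsets : ∀ t, MeasurableSet[m₂ ⊔ m₁] t →
      ∫ x in t, (μ[f|m₁]) x ∂μ = ∫ x in t, f x ∂μ := by
    refine @MeasurableSpace.induction_on_inter Ω (m₂ ⊔ m₁)
      (fun t _ => ∫ x in t, (μ[f|m₁]) x ∂μ = ∫ x in t, f x ∂μ)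
      _ (aux_sup_eq_generateFrom m₂ m₁) (aux_isPiSystem m₂ m₁) (by simp) ?_ ?_ ?_
    · rintro t ⟨A, B, hA, hB, rfl⟩
      exact (aux_setIntegral_condexp_eq m₁ m₂ (mY ⊔ m₁) μ hm₁ hm₂ hM
        (fun C A' hC hA' => hprod C A' hC hA') f hf_int hfM.aestronglyMeasurable hA hB).symm
    · intro t ht hCt
      have htΩ : MeasurableSet[mΩ] t := hm t ht
      have h1 := integral_add_compl htΩ (integrable_condExp : Integrable (μ[f|m₁]) μ)
      have h2 := integral_add_compl htΩ hf_int
      have h3 : ∫ x, (μ[f|m₁]) x ∂μ = ∫ x, f x ∂μ := integral_condExp hm₁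
      linarith
    · intro s hdisj hmeas hCs
      have hmeasΩ : ∀ i, MeasurableSet[mΩ] (s i) := fun i => hm _ (hmeas i)
      rw [integral_iUnion hmeasΩ hdisj integrable_condExp.integrableOn,
        integral_iUnion hmeasΩ hdisj hf_int.integrableOn]
      exact tsum_congr hCs
  exact (ae_eq_condExp_of_forall_setIntegral_eq hm hf_int
    (fun s _ _ => integrable_condExp.integrableOn)
    (fun s hs _ => hsets s hs)
    (stronglyMeasurable_condExp.mono le_sup_right : StronglyMeasurable[m₂ ⊔ m₁] (μ[f|m₁])).aestronglyMeasurable).symm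

/-- Proposition 1: under conditional independence of `Y` and `D` given `σ(Z)`, the conditional
`r`-th moment of the residual `ξ = Y - g(Z)` given `(D, Z)` does not depend on `D`:
`E[(Y - g(Z))^r | σ(D) ⊔ σ(Z)] = E[(Y - g(Z))^r | σ(Z)]` a.s. -/
theorem residual_cond_moment_indep_of_treatment {Ω E S : Type*}
    [mΩ : MeasurableSpace Ω] [StandardBorelSpace Ω] [Nonempty Ω]
    [mE : MeasurableSpace E] [mS : MeasurableSpace S]
    (μ : Measure Ω) [IsProbabilityMeasure μ]
    (Z : Ω → E) (D : Ω → S) (hZ : Measurable Z) (hD : Measurable D)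
    (Y : Ω → ℝ) (hY : Measurable Y)
    (hindep : CondIndepFun (MeasurableSpace.comap Z mE) (measurable_iff_comap_le.mp hZ) Y D μ)
    (g : E → ℝ) (hg : Measurable g) (r : ℕ) (hr : 1 ≤ r)
    (hint : Integrable (fun ω => (Y ω - g (Z ω)) ^ r) μ) :
    μ[fun ω => (Y ω - g (Z ω)) ^ r|MeasurableSpace.comap D mS ⊔ MeasurableSpace.comap Z mE]
      =ᵐ[μ] μ[fun ω => (Y ω - g (Z ω)) ^ r|MeasurableSpace.comap Z mE] := by
  have hKI : Kernel.Indep (MeasurableSpace.comap Y inferInstance) (MeasurableSpace.comap D mS)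
      (condExpKernel μ (MeasurableSpace.comap Z mE)) (μ.trim hZ.comap_le) := hindep
  have hfM : StronglyMeasurable[MeasurableSpace.comap Y inferInstance ⊔
      MeasurableSpace.comap Z mE] (fun ω => (Y ω - g (Z ω)) ^ r) := by
    have hYM : Measurable[MeasurableSpace.comap Y inferInstance ⊔
        MeasurableSpace.comap Z mE] Y := measurable_iff_comap_le.mpr le_sup_left
    have hZM : Measurable[MeasurableSpace.comap Y inferInstance ⊔
        MeasurableSpace.comap Z mE] (fun ω => g (Z ω)) :=
      hg.comp (measurable_iff_comap_le.mpr le_sup_right)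
    exact ((hYM.sub hZM).pow_const r).stronglyMeasurable
  exact aux_main (MeasurableSpace.comap Z mE) (MeasurableSpace.comap Y inferInstance)
    (MeasurableSpace.comap D mS) μ hZ.comap_le hY.comap_le hD.comap_le hKI _ hint hfM
end
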